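/- The k-dominance relation is not transitive in general: there exist d, k with d/2 < k < d and three objects u, v, w in R^d such that u k-dominates v, v k-dominates w, and w k-dominates u. -/

import Mathlib

/-- `x` k-dominates `y`: `x ≤ y` on at least `k` coordinates and `x < y` somewhere. -/
def kdom (d k : ℕ) (x y : Fin d → ℝ) : Prop :=
  ∃ S : Finset (Fin d), k ≤ S.card ∧ (∀ i ∈ S, x i ≤ y i) ∧ ∃ j, x j < y j

/-- The `k`-dominance relation can be cyclic (hence is not transitive in general):
there are `d`, `k` with `d/2 < k < d` and objects `u, v, w` with
`u ≻ₖ v ≻ₖ w ≻ₖ u`. -/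
theorem kdom_not_transitive :
    ∃ (d k : ℕ) (u v w : Fin d → ℝ), d / 2 < k ∧ k < d ∧
      kdom d k u v ∧ kdom d k v w ∧ kdom d k w u := by
  refine ⟨3, 2, ![0,1,2], ![1,2,0], ![2,0,1], by norm_num, by norm_num, ?_, ?_, ?_⟩
  · exact ⟨{0,1}, by decide, by intro i hi; fin_cases hi <;> norm_num, 0, by norm_num⟩
  · exact ⟨{0,2}, by decide, by intro i hi; fin_cases hi <;> (simp only [Fin.isValue, Matrix.cons_val, Matrix.cons_val_zero]; norm_num), 0, by norm_num⟩
  · exact ⟨{1,2}, by decide, by intro i hi; fin_cases hi <;> (simp only [Fin.isValue, Matrix.cons_val, Matrix.cons_val_zero]; norm_num), 1, by norm_num⟩
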